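/- Let φ₀, ξ ∈ ℝ and define E_{−,ξ}(s) = (cos(φ₀ s/2), e^{iξ} sin(φ₀ s/2)) and E_{+,ξ}(s) = (−sin(φ₀ s/2), e^{iξ} cos(φ₀ s/2)) in ℂ². Then for every s ∈ ℝ, i( |d_s E_{−,ξ}(s)⟩⟨E_{−,ξ}(s)| + |d_s E_{+,ξ}(s)⟩⟨E_{+,ξ}(s)| ) = (φ₀/2)( cos ξ · σ_y − sin ξ · σ_x ) as 2×2 complex matrices; in particular the transitionless quantum-gate Hamiltonian is independent of s. -/

import Mathlib

open Matrix Complex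

noncomputable def σx : Matrix (Fin 2) (Fin 2) ℂ := !![0, 1; 1, 0]
noncomputable def σy : Matrix (Fin 2) (Fin 2) ℂ := !![0, -Complex.I; Complex.I, 0]

noncomputable def outer (u v : Fin 2 → ℂ) : Matrix (Fin 2) (Fin 2) ℂ :=
  Matrix.of fun a b => u a * (starRingEnd ℂ) (v b)

lemma lin_deriv (φ₀ s : ℝ) : HasDerivAt (fun u : ℝ => φ₀ * u / 2) (φ₀ / 2) s := by
  simpa [div_eq_mul_inv, mul_assoc] using ((hasDerivAt_id s).div_const 2).const_mul φ₀

lemma cos_deriv (φ₀ s : ℝ) :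
    HasDerivAt (fun u : ℝ => ((Real.cos (φ₀ * u / 2) : ℝ) : ℂ))
      ((-Real.sin (φ₀ * s / 2) * (φ₀ / 2) : ℝ) : ℂ) s :=
  (((Real.hasDerivAt_cos _).comp s (lin_deriv φ₀ s))).ofReal_comp

lemma sin_deriv (φ₀ s : ℝ) :
    HasDerivAt (fun u : ℝ => ((Real.sin (φ₀ * u / 2) : ℝ) : ℂ))
      ((Real.cos (φ₀ * s / 2) * (φ₀ / 2) : ℝ) : ℂ) s :=
  (((Real.hasDerivAt_sin _).comp s (lin_deriv φ₀ s))).ofReal_comp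

theorem transitionless_gate_hamiltonian (φ₀ ξ : ℝ)
    (Em Ep Em' Ep' : ℝ → Fin 2 → ℂ)
    (hEm : ∀ s : ℝ, Em s = ![(Real.cos (φ₀ * s / 2) : ℂ),
      Complex.exp (Complex.I * (ξ : ℂ)) * (Real.sin (φ₀ * s / 2) : ℂ)])
    (hEp : ∀ s : ℝ, Ep s = ![-(Real.sin (φ₀ * s / 2) : ℂ),
      Complex.exp (Complex.I * (ξ : ℂ)) * (Real.cos (φ₀ * s / 2) : ℂ)])
    (hEm' : ∀ (s : ℝ) (i : Fin 2), HasDerivAt (fun u : ℝ => Em u i) (Em' s i) s)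
    (hEp' : ∀ (s : ℝ) (i : Fin 2), HasDerivAt (fun u : ℝ => Ep u i) (Ep' s i) s) :
    ∀ s : ℝ,
      Complex.I • (outer (Em' s) (Em s) + outer (Ep' s) (Ep s))
        = ((φ₀ / 2 : ℝ) : ℂ) • ((Real.cos ξ : ℂ) • σy - (Real.sin ξ : ℂ) • σx) := by
  intro s
  have hm0 : Em' s 0 = ((-Real.sin (φ₀ * s / 2) * (φ₀ / 2) : ℝ) : ℂ) := by
    refine (hEm' s 0).unique ?_
    have : (fun u : ℝ => Em u 0) = fun u : ℝ => ((Real.cos (φ₀ * u / 2) : ℝ) : ℂ) := by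
      funext u; rw [hEm u]; simp
    rw [this]; exact cos_deriv φ₀ s
  have hm1 : Em' s 1 = Complex.exp (Complex.I * (ξ : ℂ)) *
      ((Real.cos (φ₀ * s / 2) * (φ₀ / 2) : ℝ) : ℂ) := by
    refine (hEm' s 1).unique ?_
    have : (fun u : ℝ => Em u 1) = fun u : ℝ =>
        Complex.exp (Complex.I * (ξ : ℂ)) * ((Real.sin (φ₀ * u / 2) : ℝ) : ℂ) := by
      funext u; rw [hEm u]; simp
    rw [this]; exact (sin_deriv φ₀ s).const_mul _
  have hp0 : Ep' s 0 = -((Real.cos (φ₀ * s / 2) * (φ₀ / 2) : ℝ) : ℂ) := by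
    refine (hEp' s 0).unique ?_
    have : (fun u : ℝ => Ep u 0) = fun u : ℝ => -((Real.sin (φ₀ * u / 2) : ℝ) : ℂ) := by
      funext u; rw [hEp u]; simp
    rw [this]; exact (sin_deriv φ₀ s).neg
  have hp1 : Ep' s 1 = Complex.exp (Complex.I * (ξ : ℂ)) *
      ((-Real.sin (φ₀ * s / 2) * (φ₀ / 2) : ℝ) : ℂ) := by
    refine (hEp' s 1).unique ?_
    have : (fun u : ℝ => Ep u 1) = fun u : ℝ =>
        Complex.exp (Complex.I * (ξ : ℂ)) * ((Real.cos (φ₀ * u / 2) : ℝ) : ℂ) := by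
      funext u; rw [hEp u]; simp
    rw [this]; exact (cos_deriv φ₀ s).const_mul _
  have hexp : Complex.exp (Complex.I * (ξ : ℂ)) =
      (Real.cos ξ : ℂ) + (Real.sin ξ : ℂ) * Complex.I := by
    rw [mul_comm, Complex.exp_mul_I, Complex.ofReal_cos, Complex.ofReal_sin]
  ext a b
  fin_cases a <;> fin_cases b <;>
    simp [outer, σx, σy, hEm s, hEp s, hm0, hm1, hp0, hp1, hexp, Matrix.smul_apply,
      Complex.ext_iff, _root_.map_mul, map_add, Complex.conj_ofReal, Complex.cos_ofReal_re, Complex.cos_ofReal_im, Complex.sin_ofReal_re, Complex.sin_ofReal_im, -Complex.ofReal_cos, -Complex.ofReal_sin] <;>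
    ring_nf <;>
    constructor <;>
    first
      | trivial
      | linear_combination (-(φ₀ * Real.sin ξ) / 2) * Real.sin_sq_add_cos_sq (φ₀ * s * (1 / 2))
      | linear_combination (-(φ₀ * Real.cos ξ) / 2) * Real.sin_sq_add_cos_sq (φ₀ * s * (1 / 2))
      | linear_combination ((φ₀ * Real.cos ξ) / 2) * Real.sin_sq_add_cos_sq (φ₀ * s * (1 / 2))
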